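/- Second-order solvability condition: with x⁽¹⁾(t) = x̃⁽¹⁾ + ∑_{k∈𝒦} Ã_k sin(2x₀+(2ω₀−k)t) − but with x̃⁽¹⁾ chosen so the constant terms cancel, the average (1/(2πq)) ∫_0^{2πq} ∂ₓG(x₀+ω₀t, t)·[∑_{k∈𝒦} Ã_k sin(2x₀+(2ω₀−k)t)] dt equals sin(4x₀) · ∑_{k,k′∈𝒦, k+k′=4ω₀} A_{k′} Ã_k, where ∂ₓG(x,t) = ∑_{k∈𝒦} 2A_k cos(2x−kt) and Ã_k = A_k/(2ω₀−k)². -/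

import Mathlib

open Real

lemma integral_sin_freq (φ : ℝ) (m q : ℤ) (hq0 : (q:ℝ) ≠ 0) :
    ∫ t in (0:ℝ)..(2 * π * q), Real.sin (φ + ((m:ℝ)/(q:ℝ)) * t) =
      if ((m:ℝ)/(q:ℝ)) = 0 then Real.sin φ * (2 * π * q) else 0 := by
  by_cases hm : ((m:ℝ)/(q:ℝ)) = 0
  · simp [hm, mul_comm]
  · rw [if_neg hm]
    have h1 : ∀ t : ℝ, Real.sin (φ + ((m:ℝ)/(q:ℝ)) * t)
        = Real.sin (((m:ℝ)/(q:ℝ)) * t + φ) := by intro t; ring_nf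
    simp_rw [h1]
    rw [intervalIntegral.integral_comp_mul_add Real.sin hm φ]
    rw [integral_sin]
    have h2 : (m:ℝ)/(q:ℝ) * (2 * π * q) + φ = φ + (m:ℝ) * (2 * π) := by
      field_simp; ring
    rw [h2, Real.cos_add_int_mul_two_pi]
    simp

lemma two_cos_sin (a b : ℝ) :
    2 * Real.cos a * Real.sin b = Real.sin (a + b) - Real.sin (a - b) := by
  rw [Real.sin_add, Real.sin_sub]; ring

lemma term_integral (a b x₀ : ℝ) (k k' p q : ℤ) (hq0 : (q:ℝ) ≠ 0) :
    ∫ t in (0:ℝ)..(2 * π * q),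
      (2 * a * Real.cos (2 * (x₀ + ((p:ℝ)/(q:ℝ)) * t) - (k:ℝ) * t)) *
        (b * Real.sin (2 * x₀ + (2 * ((p:ℝ)/(q:ℝ)) - (k':ℝ)) * t)) =
    if (k:ℝ) + (k':ℝ) = 4 * ((p:ℝ)/(q:ℝ))
    then Real.sin (4 * x₀) * (2 * π * q) * (a * b) else 0 := by
  have e1 : ((((4*p - q*(k+k')) : ℤ)):ℝ)/(q:ℝ)
      = 4 * ((p:ℝ)/(q:ℝ)) - (k:ℝ) - (k':ℝ) := by
    push_cast; field_simp; ring
  have e2 : ((((q*(k'-k)) : ℤ)):ℝ)/(q:ℝ) = (k':ℝ) - (k:ℝ) := by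
    push_cast; field_simp
  have key : ∀ t : ℝ,
      (2 * a * Real.cos (2 * (x₀ + ((p:ℝ)/(q:ℝ)) * t) - (k:ℝ) * t)) *
        (b * Real.sin (2 * x₀ + (2 * ((p:ℝ)/(q:ℝ)) - (k':ℝ)) * t))
      = a * b * (Real.sin (4*x₀ + (((((4*p - q*(k+k')) : ℤ)):ℝ)/(q:ℝ)) * t)
          - Real.sin (0 + (((((q*(k'-k)) : ℤ)):ℝ)/(q:ℝ)) * t)) := by
    intro t
    rw [e1, e2]
    have h2 := two_cos_sin (2 * (x₀ + ((p:ℝ)/(q:ℝ)) * t) - (k:ℝ) * t)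
      (2 * x₀ + (2 * ((p:ℝ)/(q:ℝ)) - (k':ℝ)) * t)
    have ha : (2 * (x₀ + ((p:ℝ)/(q:ℝ)) * t) - (k:ℝ) * t) +
        (2 * x₀ + (2 * ((p:ℝ)/(q:ℝ)) - (k':ℝ)) * t)
        = 4*x₀ + (4 * ((p:ℝ)/(q:ℝ)) - (k:ℝ) - (k':ℝ)) * t := by ring
    have hb : (2 * (x₀ + ((p:ℝ)/(q:ℝ)) * t) - (k:ℝ) * t) -
        (2 * x₀ + (2 * ((p:ℝ)/(q:ℝ)) - (k':ℝ)) * t)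
        = 0 + ((k':ℝ) - (k:ℝ)) * t := by ring
    rw [ha, hb] at h2
    linear_combination a * b * h2
  simp_rw [key]
  have i1 : IntervalIntegrable
      (fun t => Real.sin (4*x₀ + (((((4*p - q*(k+k')) : ℤ)):ℝ)/(q:ℝ)) * t))
      MeasureTheory.volume 0 (2 * π * q) :=
    (Continuous.intervalIntegrable (by fun_prop) _ _)
  have i2 : IntervalIntegrable
      (fun t => Real.sin (0 + (((((q*(k'-k)) : ℤ)):ℝ)/(q:ℝ)) * t))
      MeasureTheory.volume 0 (2 * π * q) :=
    (Continuous.intervalIntegrable (by fun_prop) _ _)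
  rw [intervalIntegral.integral_const_mul, intervalIntegral.integral_sub i1 i2,
    integral_sin_freq _ _ _ hq0, integral_sin_freq _ _ _ hq0]
  rw [e1, e2]
  by_cases h : (k:ℝ) + (k':ℝ) = 4 * ((p:ℝ)/(q:ℝ))
  · rw [if_pos h, if_pos (by linarith)]
    by_cases h2 : (k':ℝ) - (k:ℝ) = 0 <;> simp [h2] <;> ring
  · rw [if_neg h, if_neg (by intro hc; apply h; linarith)]
    by_cases h2 : (k':ℝ) - (k:ℝ) = 0 <;> simp [h2]

theorem second_order_average (𝒦 : Finset ℤ) (A : ℤ → ℝ) (p q : ℤ) (hq : 1 ≤ q) (x₀ : ℝ)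
    (hres : ∀ k ∈ 𝒦, 2 * ((p : ℝ) / (q : ℝ)) ≠ (k : ℝ)) :
    (1 / (2 * π * q)) * ∫ t in (0:ℝ)..(2 * π * q),
        (∑ k ∈ 𝒦, 2 * A k * Real.cos (2 * (x₀ + ((p : ℝ) / (q : ℝ)) * t) - (k : ℝ) * t)) *
          (∑ k ∈ 𝒦, (A k / (2 * ((p : ℝ) / (q : ℝ)) - (k : ℝ)) ^ 2) *
            Real.sin (2 * x₀ + (2 * ((p : ℝ) / (q : ℝ)) - (k : ℝ)) * t)) =
      Real.sin (4 * x₀) * ∑ k ∈ 𝒦, ∑ k' ∈ 𝒦,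
        if (k : ℝ) + (k' : ℝ) = 4 * ((p : ℝ) / (q : ℝ))
        then A k' * (A k / (2 * ((p : ℝ) / (q : ℝ)) - (k : ℝ)) ^ 2) else 0 := by
  have hq0 : (q:ℝ) ≠ 0 := by
    exact_mod_cast (by omega : q ≠ 0)
  have hqpos : (0:ℝ) < q := by exact_mod_cast hq
  have hT : (2 * π * (q:ℝ)) ≠ 0 := by positivity
  have hsum : ∀ t : ℝ,
      (∑ k ∈ 𝒦, 2 * A k * Real.cos (2 * (x₀ + ((p : ℝ) / (q : ℝ)) * t) - (k : ℝ) * t)) *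
        (∑ k ∈ 𝒦, (A k / (2 * ((p : ℝ) / (q : ℝ)) - (k : ℝ)) ^ 2) *
          Real.sin (2 * x₀ + (2 * ((p : ℝ) / (q : ℝ)) - (k : ℝ)) * t))
      = ∑ k ∈ 𝒦, ∑ k' ∈ 𝒦,
          (2 * A k * Real.cos (2 * (x₀ + ((p : ℝ) / (q : ℝ)) * t) - (k : ℝ) * t)) *
            ((A k' / (2 * ((p : ℝ) / (q : ℝ)) - (k' : ℝ)) ^ 2) *
              Real.sin (2 * x₀ + (2 * ((p : ℝ) / (q : ℝ)) - (k' : ℝ)) * t)) := by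
    intro t; rw [Finset.sum_mul_sum]
  simp_rw [hsum]
  rw [intervalIntegral.integral_finset_sum (fun k _ =>
    Continuous.intervalIntegrable (by fun_prop) _ _)]
  have hinner : ∀ k ∈ 𝒦,
      (∫ t in (0:ℝ)..(2 * π * q), ∑ k' ∈ 𝒦,
        (2 * A k * Real.cos (2 * (x₀ + ((p : ℝ) / (q : ℝ)) * t) - (k : ℝ) * t)) *
          ((A k' / (2 * ((p : ℝ) / (q : ℝ)) - (k' : ℝ)) ^ 2) *
            Real.sin (2 * x₀ + (2 * ((p : ℝ) / (q : ℝ)) - (k' : ℝ)) * t)))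
      = ∑ k' ∈ 𝒦, if (k:ℝ) + (k':ℝ) = 4 * ((p:ℝ)/(q:ℝ))
          then Real.sin (4 * x₀) * (2 * π * q) *
            (A k * (A k' / (2 * ((p : ℝ) / (q : ℝ)) - (k' : ℝ)) ^ 2)) else 0 := by
    intro k _
    rw [intervalIntegral.integral_finset_sum (fun k' _ =>
      Continuous.intervalIntegrable (by fun_prop) _ _)]
    exact Finset.sum_congr rfl fun k' _ =>
      term_integral (A k) (A k' / (2 * ((p : ℝ) / (q : ℝ)) - (k' : ℝ)) ^ 2) x₀ k k' p q hq0
  rw [Finset.sum_congr rfl hinner]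
  rw [Finset.sum_comm]
  rw [Finset.mul_sum, Finset.mul_sum]
  refine Finset.sum_congr rfl fun a _ => ?_
  rw [Finset.mul_sum, Finset.mul_sum]
  refine Finset.sum_congr rfl fun b _ => ?_
  rw [add_comm (b:ℝ) (a:ℝ)]
  have hfactor : ∀ X : ℝ, 1/(2*π*(q:ℝ)) * (Real.sin (4*x₀) * (2*π*(q:ℝ)) * X)
      = Real.sin (4*x₀) * X := by
    intro X
    field_simp
  by_cases h : (a:ℝ) + (b:ℝ) = 4 * ((p:ℝ)/(q:ℝ))
  · rw [if_pos h, if_pos h, hfactor]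
  · rw [if_neg h, if_neg h, mul_zero, mul_zero]
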